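/- arXiv:2508.14324 — 2 statements merged into one kernel-verified Lean document; each statement's English description precedes it below -/
import Mathlib

section
/- Let G = (V,E) be a finite simple graph on n vertices with maximum degree at most d, let k be a natural number, let φ > 0, and let E_cut ⊆ E with |E_cut| ≤ φ·n. Let G' = (V, E \ E_cut). Then the ℓ1-distance between the k-disc frequency vectors satisfies ‖f_G − f_{G'}‖₁ ≤ 2·φ·B(d,k), where B(d,k) = 2·∑_{i=0}^{k} d^i. Consequently, if φ·B(d,k) ≤ ε/2 then ‖f_G − f_{G'}‖₁ ≤ ε. -/
open SimpleGraph

/-- The ball of radius `k` around `v`: vertices at graph distance at most `k` from `v`. -/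
def ball {V : Type*} (G : SimpleGraph V) (k : ℕ) (v : V) : Set V :=
  {w : V | G.edist v w ≤ k}

theorem root_mem_ball {V : Type*} (G : SimpleGraph V) (k : ℕ) (v : V) :
    v ∈ ball G k v := by
  simp [_root_.ball, SimpleGraph.edist_self]

/-- The `k`-disc of `v` in `G` is rooted-isomorphic to the `k`-disc of `w` in `H`. -/
def DiscIso {V W : Type*} (G : SimpleGraph V) (H : SimpleGraph W) (k : ℕ)
    (v : V) (w : W) : Prop :=
  ∃ φ : ball G k v ≃ ball H k w,
    (∀ a b : ball G k v, G.Adj a b ↔ H.Adj (φ a) (φ b)) ∧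
      φ ⟨v, root_mem_ball G k v⟩ = ⟨w, root_mem_ball H k w⟩

theorem DiscIso.refl {V : Type*} (G : SimpleGraph V) (k : ℕ) (v : V) :
    DiscIso G G k v v :=
  ⟨Equiv.refl _, fun _ _ => Iff.rfl, rfl⟩

theorem DiscIso.symm {V W : Type*} {G : SimpleGraph V} {H : SimpleGraph W} {k : ℕ}
    {v : V} {w : W} (h : DiscIso G H k v w) : DiscIso H G k w v := by
  obtain ⟨φ, hadj, hroot⟩ := h
  refine ⟨φ.symm, fun a b => ?_, ?_⟩
  · have := hadj (φ.symm a) (φ.symm b)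
    rw [Equiv.apply_symm_apply, Equiv.apply_symm_apply] at this
    exact this.symm
  · rw [← hroot, Equiv.symm_apply_apply]

theorem DiscIso.trans {U V W : Type*} {F : SimpleGraph U} {G : SimpleGraph V}
    {H : SimpleGraph W} {k : ℕ} {u : U} {v : V} {w : W}
    (h₁ : DiscIso F G k u v) (h₂ : DiscIso G H k v w) : DiscIso F H k u w := by
  obtain ⟨φ, hφ, rφ⟩ := h₁
  obtain ⟨ψ, hψ, rψ⟩ := h₂
  exact ⟨φ.trans ψ, fun a b => (hφ a b).trans (hψ (φ a) (φ b)),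
    by simp [Equiv.trans_apply, rφ, rψ]⟩

/-- The equivalence relation "having rooted-isomorphic `k`-discs" on the disjoint union
of the vertex sets of `G` and `H` (vertices on the left take their disc in `G`,
vertices on the right in `H`). -/
def discSetoid {V W : Type*} (G : SimpleGraph V) (H : SimpleGraph W) (k : ℕ) :
    Setoid (V ⊕ W) where
  r x y :=
    match x, y with
    | .inl a, .inl b => DiscIso G G k a b
    | .inl a, .inr b => DiscIso G H k a b
    | .inr a, .inl b => DiscIso H G k a b
    | .inr a, .inr b => DiscIso H H k a b
  iseqv := by
    refine ⟨?_, ?_, ?_⟩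
    · rintro (a | a) <;> exact DiscIso.refl _ _ _
    · rintro (a | a) (b | b) h <;> exact h.symm
    · rintro (a | a) (b | b) (c | c) h₁ h₂ <;> exact h₁.trans h₂

/-- The `ℓ₁`-distance between the `k`-disc frequency vectors of the finite graphs
`G` and `H`: the sum, over all rooted-isomorphism types `c` of `k`-discs occurring in
`G` or `H`, of the absolute difference of the fractions of vertices of `G`
(respectively of `H`) whose `k`-disc has type `c`. -/
noncomputable def freqL1 {V W : Type*} [Fintype V] [Fintype W]
    (G : SimpleGraph V) (H : SimpleGraph W) (k : ℕ) : ℝ :=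
  ∑ᶠ c : Quotient (discSetoid G H k),
    |({a : V | Quotient.mk (discSetoid G H k) (Sum.inl a) = c}.ncard : ℝ) /
        (Fintype.card V : ℝ) -
      ({b : W | Quotient.mk (discSetoid G H k) (Sum.inr b) = c}.ncard : ℝ) /
        (Fintype.card W : ℝ)|

/-- `B d k = 2 * ∑_{i=0}^{k} d^i`. -/

private lemma ncard_biUnion_le' {α β : Type*} [Finite β] (s : Finset α) (f : α → Set β) :
    (⋃ a ∈ s, f a).ncard ≤ ∑ a ∈ s, (f a).ncard := by
  classical
  induction s using Finset.induction with
  | empty => simp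
  | @insert a s h ih =>
    rw [Finset.set_biUnion_insert, Finset.sum_insert h]
    exact (Set.ncard_union_le _ _).trans (by omega)

private lemma exists_adj_edist_le {V : Type*} (G : SimpleGraph V) {k : ℕ} {v w : V}
    (hne : v ≠ w) (h : G.edist v w ≤ (k + 1 : ℕ)) :
    ∃ u, G.Adj v u ∧ G.edist u w ≤ k := by
  have hne' : G.edist v w ≠ ⊤ := fun ht => by
    rw [ht] at h; exact (ENat.coe_ne_top _) (top_le_iff.mp h)
  obtain ⟨p, hp⟩ := SimpleGraph.exists_walk_of_edist_ne_top hne'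
  cases p with
  | nil => exact absurd rfl hne
  | @cons _ u _ ha q =>
    refine ⟨u, ha, ?_⟩
    have hlen : (Walk.cons ha q).length ≤ k + 1 := by exact_mod_cast hp.le.trans h
    have hq : q.length ≤ k := by simpa [Walk.length_cons] using hlen
    exact (edist_le q).trans (by exact_mod_cast hq)

private lemma ball_ncard_le {V : Type*} [Fintype V] (G : SimpleGraph V) [DecidableRel G.Adj]
    {d : ℕ} (hdeg : ∀ v : V, G.degree v ≤ d) :
    ∀ (k : ℕ) (v : V), (ball G k v).ncard ≤ ∑ i ∈ Finset.range (k + 1), d ^ i := by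
  intro k
  induction k with
  | zero =>
    intro v
    have hb : ball G 0 v = {v} := by
      ext w
      simp only [_root_.ball, Set.mem_setOf_eq, Set.mem_singleton_iff]
      constructor
      · intro hw
        have h0 : G.edist v w = 0 := le_antisymm (by exact_mod_cast hw) (by simp)
        exact (edist_eq_zero_iff.mp h0).symm
      · rintro rfl
        simp [SimpleGraph.edist_self]
    simp [hb]
  | succ k ih =>
    intro v
    have hsub : ball G (k + 1) v ⊆ insert v (⋃ u ∈ G.neighborFinset v, ball G k u) := by
      intro w hw
      rcases eq_or_ne v w with rfl | hne
      · exact Set.mem_insert _ _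
      · obtain ⟨u, hadj, hu⟩ := exists_adj_edist_le G hne hw
        exact Set.mem_insert_of_mem _ (Set.mem_iUnion₂.mpr ⟨u, by simp [hadj], hu⟩)
    calc (ball G (k + 1) v).ncard
        ≤ (insert v (⋃ u ∈ G.neighborFinset v, ball G k u)).ncard :=
          Set.ncard_le_ncard hsub (Set.toFinite _)
      _ ≤ (⋃ u ∈ G.neighborFinset v, ball G k u).ncard + 1 := Set.ncard_insert_le _ _
      _ ≤ (∑ u ∈ G.neighborFinset v, (ball G k u).ncard) + 1 := by
          gcongr; exact ncard_biUnion_le' _ _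
      _ ≤ (∑ _u ∈ G.neighborFinset v, ∑ i ∈ Finset.range (k + 1), d ^ i) + 1 := by
          gcongr with u hu; exact ih u
      _ = G.degree v * (∑ i ∈ Finset.range (k + 1), d ^ i) + 1 := by
          rw [Finset.sum_const, smul_eq_mul]; rfl
      _ ≤ d * (∑ i ∈ Finset.range (k + 1), d ^ i) + 1 := by gcongr; exact hdeg v
      _ = ∑ i ∈ Finset.range (k + 2), d ^ i := geom_sum_succ.symm

private lemma discIso_deleteEdges {V : Type*} (G : SimpleGraph V) (Ecut : Set (Sym2 V))
    (k : ℕ) (v : V)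
    (hv : ∀ u, (∃ e ∈ Ecut, u ∈ e) → ¬ G.edist u v ≤ k) :
    DiscIso G (G.deleteEdges Ecut) k v v := by
  have hball : ball G k v = ball (G.deleteEdges Ecut) k v := by
    ext w
    simp only [_root_.ball, Set.mem_setOf_eq]
    constructor
    · intro hw
      have hne' : G.edist v w ≠ ⊤ := fun ht => by
        rw [ht] at hw; exact (ENat.coe_ne_top _) (top_le_iff.mp hw)
      obtain ⟨p, hp⟩ := SimpleGraph.exists_walk_of_edist_ne_top hne'
      have hplen : (p.length : ℕ∞) ≤ k := hp.le.trans hw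
      classical
      have hsup : ∀ x ∈ p.support, G.edist x v ≤ k := by
        intro x hx
        rw [SimpleGraph.edist_comm]
        refine (edist_le (p.takeUntil x hx)).trans ?_
        exact_mod_cast (Nat.cast_le (α := ℕ∞)).mpr (p.length_takeUntil_le hx) |>.trans hplen
      have hedges : ∀ e ∈ p.edges, e ∈ (G.deleteEdges Ecut).edgeSet := by
        intro e he
        rw [SimpleGraph.edgeSet_deleteEdges]
        refine ⟨p.edges_subset_edgeSet he, fun hmem => ?_⟩
        induction e with
        | h a b =>
          exact hv a ⟨_, hmem, Sym2.mem_mk_left a b⟩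
            (hsup a (p.fst_mem_support_of_mem_edges he))
      refine le_trans (edist_le (p.transfer _ hedges)) ?_
      rw [Walk.length_transfer]
      exact hplen
    · intro hw
      exact le_trans (SimpleGraph.edist_anti (SimpleGraph.deleteEdges_le Ecut)) hw
  refine ⟨Equiv.setCongr hball, fun a b => ?_, ?_⟩
  · simp only [Equiv.setCongr_apply]
    constructor
    · intro hab
      rw [SimpleGraph.deleteEdges_adj]
      refine ⟨hab, fun hmem => ?_⟩
      exact hv a ⟨_, hmem, Sym2.mem_mk_left _ _⟩ (by rw [SimpleGraph.edist_comm]; exact a.2)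
    · exact fun h => ((SimpleGraph.deleteEdges_adj).mp h).1
  · rfl

def B (d k : ℕ) : ℕ := 2 * ∑ i ∈ Finset.range (k + 1), d ^ i

/-- Let `G` be a finite simple graph on `n` vertices of maximum degree
at most `d`, let `φ > 0`, and let `Ecut` be a set of at most `φ·n` edges of `G`.
Let `G' = G.deleteEdges Ecut`.  Then the `ℓ₁`-distance between the `k`-disc frequency
vectors of `G` and `G'` is at most `2·φ·B(d,k)`; consequently, if `φ·B(d,k) ≤ ε/2`
then this distance is at most `ε`. -/
theorem freqL1_deleteEdges_le
    {V : Type*} [Fintype V] [Nonempty V] (G : SimpleGraph V) [DecidableRel G.Adj]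
    (d k : ℕ) (hdeg : ∀ v : V, G.degree v ≤ d)
    (φ : ℝ) (hφ : 0 < φ)
    (Ecut : Set (Sym2 V)) (hE : Ecut ⊆ G.edgeSet)
    (hcard : (Ecut.ncard : ℝ) ≤ φ * (Fintype.card V : ℝ)) :
    freqL1 G (G.deleteEdges Ecut) k ≤ 2 * φ * (B d k : ℝ) ∧
      ∀ ε : ℝ, φ * (B d k : ℝ) ≤ ε / 2 → freqL1 G (G.deleteEdges Ecut) k ≤ ε := by
  classical
  set G' := G.deleteEdges Ecut with hG'def
  set S : Set V := {x : V | ∃ u, (∃ e ∈ Ecut, u ∈ e) ∧ G.edist u x ≤ k} with hSdef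
  set n : ℝ := (Fintype.card V : ℝ) with hndef
  have hn : (0:ℝ) < n := by
    rw [hndef]; exact_mod_cast Fintype.card_pos
  have hTe : ∀ e : Sym2 V, ({x : V | ∃ u ∈ e, G.edist u x ≤ (k:ℕ∞)}).ncard
      ≤ 2 * ∑ i ∈ Finset.range (k + 1), d ^ i := by
    intro e
    induction e with
    | h a b =>
      have he : {x : V | ∃ u ∈ (s(a,b) : Sym2 V), G.edist u x ≤ (k:ℕ∞)}
          = ball G k a ∪ ball G k b := by
        ext x
        simp only [_root_.ball, Set.mem_union, Set.mem_setOf_eq, Sym2.mem_iff]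
        constructor
        · rintro ⟨u, (rfl|rfl), hu⟩
          exacts [Or.inl hu, Or.inr hu]
        · rintro (h|h)
          exacts [⟨a, Or.inl rfl, h⟩, ⟨b, Or.inr rfl, h⟩]
      rw [he, two_mul]
      exact (Set.ncard_union_le _ _).trans
        (add_le_add (ball_ncard_le G hdeg k a) (ball_ncard_le G hdeg k b))
  have hEfin : Ecut.Finite := Set.toFinite _
  have hScard : S.ncard ≤ Ecut.ncard * B d k := by
    have hsub : S ⊆ ⋃ e ∈ hEfin.toFinset, {x : V | ∃ u ∈ e, G.edist u x ≤ (k:ℕ∞)} := by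
      rintro x ⟨u, ⟨e, he, hue⟩, hd⟩
      exact Set.mem_iUnion₂.mpr ⟨e, hEfin.mem_toFinset.mpr he, ⟨u, hue, hd⟩⟩
    calc S.ncard ≤ _ := Set.ncard_le_ncard hsub (Set.toFinite _)
      _ ≤ ∑ e ∈ hEfin.toFinset, ({x : V | ∃ u ∈ e, G.edist u x ≤ (k:ℕ∞)}).ncard :=
          ncard_biUnion_le' _ _
      _ ≤ ∑ _e ∈ hEfin.toFinset, 2 * ∑ i ∈ Finset.range (k + 1), d ^ i :=
          Finset.sum_le_sum fun e _ => hTe e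
      _ = Ecut.ncard * (2 * ∑ i ∈ Finset.range (k + 1), d ^ i) := by
          rw [Finset.sum_const, smul_eq_mul, Set.ncard_eq_toFinset_card _ hEfin]
      _ = Ecut.ncard * B d k := rfl
  have hkey : ∀ x : V, x ∉ S →
      Quotient.mk (discSetoid G G' k) (Sum.inl x)
        = Quotient.mk (discSetoid G G' k) (Sum.inr x) := by
    intro x hx
    exact Quotient.sound (discIso_deleteEdges G Ecut k x (fun u hu hle => hx ⟨u, hu, hle⟩))
  haveI : Fintype (Quotient (discSetoid G G' k)) := Fintype.ofFinite _
  have hfreq : freqL1 G G' k = ∑ c : Quotient (discSetoid G G' k),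
      |({a : V | Quotient.mk (discSetoid G G' k) (Sum.inl a) = c}.ncard : ℝ) / n -
        ({b : V | Quotient.mk (discSetoid G G' k) (Sum.inr b) = c}.ncard : ℝ) / n| := by
    rw [freqL1]; exact finsum_eq_sum_of_fintype _
  have hsumA : ∑ c : Quotient (discSetoid G G' k),
      ({a : V | Quotient.mk (discSetoid G G' k) (Sum.inl a) = c} ∩ S).ncard = S.ncard := by
    rw [Set.ncard_eq_toFinset_card S (Set.toFinite S),
      Finset.card_eq_sum_card_fiberwise
        (f := fun v => Quotient.mk (discSetoid G G' k) (Sum.inl v)) (t := Finset.univ)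
        (fun x _ => Finset.mem_univ _)]
    refine Finset.sum_congr rfl fun c _ => ?_
    rw [← Set.ncard_coe_finset]
    congr 1
    ext x
    simp only [Set.mem_inter_iff, Finset.coe_filter, Set.Finite.mem_toFinset, Set.mem_setOf_eq]
    tauto
  have hsumB : ∑ c : Quotient (discSetoid G G' k),
      ({b : V | Quotient.mk (discSetoid G G' k) (Sum.inr b) = c} ∩ S).ncard = S.ncard := by
    rw [Set.ncard_eq_toFinset_card S (Set.toFinite S),
      Finset.card_eq_sum_card_fiberwise
        (f := fun v => Quotient.mk (discSetoid G G' k) (Sum.inr v)) (t := Finset.univ)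
        (fun x _ => Finset.mem_univ _)]
    refine Finset.sum_congr rfl fun c _ => ?_
    rw [← Set.ncard_coe_finset]
    congr 1
    ext x
    simp only [Set.mem_inter_iff, Finset.coe_filter, Set.Finite.mem_toFinset, Set.mem_setOf_eq]
    tauto
  have hpoint : ∀ c : Quotient (discSetoid G G' k),
      |({a : V | Quotient.mk (discSetoid G G' k) (Sum.inl a) = c}.ncard : ℝ) / n -
        ({b : V | Quotient.mk (discSetoid G G' k) (Sum.inr b) = c}.ncard : ℝ) / n|
      ≤ ((({a : V | Quotient.mk (discSetoid G G' k) (Sum.inl a) = c} ∩ S).ncard : ℝ) +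
          (({b : V | Quotient.mk (discSetoid G G' k) (Sum.inr b) = c} ∩ S).ncard : ℝ)) / n := by
    intro c
    set Ac := {a : V | Quotient.mk (discSetoid G G' k) (Sum.inl a) = c} with hAc
    set Bc := {b : V | Quotient.mk (discSetoid G G' k) (Sum.inr b) = c} with hBc
    have hAB : Ac \ S = Bc \ S := by
      ext x
      simp only [Set.mem_diff, hAc, hBc, Set.mem_setOf_eq]
      constructor
      · rintro ⟨h1, h2⟩; exact ⟨(hkey x h2).symm.trans h1, h2⟩
      · rintro ⟨h1, h2⟩; exact ⟨(hkey x h2).trans h1, h2⟩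
    have h1 : Ac.ncard = (Ac ∩ S).ncard + (Ac \ S).ncard :=
      (Set.ncard_inter_add_ncard_diff_eq_ncard _ _ (Set.toFinite _)).symm
    have h2 : Bc.ncard = (Bc ∩ S).ncard + (Bc \ S).ncard :=
      (Set.ncard_inter_add_ncard_diff_eq_ncard _ _ (Set.toFinite _)).symm
    rw [div_sub_div_same, abs_div, abs_of_pos hn]
    have habs : |(Ac.ncard : ℝ) - (Bc.ncard : ℝ)|
        ≤ ((Ac ∩ S).ncard : ℝ) + ((Bc ∩ S).ncard : ℝ) := by
      rw [h1, h2, hAB]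
      have ha : (0:ℝ) ≤ ((Ac ∩ S).ncard : ℝ) := Nat.cast_nonneg _
      have hb : (0:ℝ) ≤ ((Bc ∩ S).ncard : ℝ) := Nat.cast_nonneg _
      rw [abs_le]
      constructor <;> push_cast <;> linarith
    gcongr
  have hmain : freqL1 G G' k ≤ 2 * φ * (B d k : ℝ) := by
    rw [hfreq]
    have hstep : ∑ c : Quotient (discSetoid G G' k),
        |({a : V | Quotient.mk (discSetoid G G' k) (Sum.inl a) = c}.ncard : ℝ) / n -
          ({b : V | Quotient.mk (discSetoid G G' k) (Sum.inr b) = c}.ncard : ℝ) / n|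
        ≤ ((S.ncard : ℝ) + (S.ncard : ℝ)) / n := by
      calc _ ≤ ∑ c : Quotient (discSetoid G G' k),
            ((({a : V | Quotient.mk (discSetoid G G' k) (Sum.inl a) = c} ∩ S).ncard : ℝ) +
              (({b : V | Quotient.mk (discSetoid G G' k) (Sum.inr b) = c} ∩ S).ncard : ℝ)) / n :=
            Finset.sum_le_sum fun c _ => hpoint c
        _ = ((S.ncard : ℝ) + (S.ncard : ℝ)) / n := by
            rw [← Finset.sum_div, Finset.sum_add_distrib]
            congr 2
            · rw [← hsumA]; push_cast; rfl
            · rw [← hsumB]; push_cast; rfl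
    refine hstep.trans ?_
    rw [div_le_iff₀ hn]
    have h1 : (S.ncard : ℝ) ≤ (Ecut.ncard : ℝ) * (B d k : ℝ) := by exact_mod_cast hScard
    have hB0 : (0:ℝ) ≤ (B d k : ℝ) := Nat.cast_nonneg _
    nlinarith [hcard]
  exact ⟨hmain, fun ε hε => hmain.trans (by linarith)⟩
end

section
/- Let T and N be positive natural numbers, let ε ∈ (0,1), let η ∈ (0,1), let p be a probability vector on {1,…,T}, and let X_1,…,X_N be independent random variables each distributed according to p, with empirical distribution p̂. If N ≥ (2T²/ε²)·ln(2T/η), then P[ ∑_{i=1}^{T} |p̂_i − p_i| > ε/2 ] ≤ η. -/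
set_option maxHeartbeats 1000000

open MeasureTheory ProbabilityTheory Real
open Real

lemma bern_g_pos {p : ℝ} (hp0 : 0 ≤ p) (hp1 : p ≤ 1) (t : ℝ) :
    0 < (1 - p) + p * exp t := by
  rcases eq_or_lt_of_le hp0 with h | h
  · simp [← h]
  · have := exp_pos t
    nlinarith

lemma bern_log_le {p : ℝ} (hp0 : 0 ≤ p) (hp1 : p ≤ 1) (t : ℝ) :
    Real.log ((1 - p) + p * exp t) ≤ p * t + t ^ 2 / 8 := by
  set g : ℝ → ℝ := fun s => (1 - p) + p * exp s with hg
  have hgpos : ∀ s, 0 < g s := fun s => bern_g_pos hp0 hp1 s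
  have hgd : ∀ s, HasDerivAt g (p * exp s) s := fun s => by
    exact ((Real.hasDerivAt_exp s).const_mul p).const_add (1 - p)
  set f : ℝ → ℝ := fun s => p * s + s ^ 2 / 8 - Real.log (g s) with hf
  set f' : ℝ → ℝ := fun s => p + s / 4 - p * exp s / g s with hf'
  have hfd : ∀ s, HasDerivAt f (f' s) s := by
    intro s
    have h1 : HasDerivAt (fun s : ℝ => p * s + s ^ 2 / 8) (p + 2 * s / 8) s := by
      have := ((hasDerivAt_pow 2 s).div_const 8).const_add (p * s)
      have h2 : HasDerivAt (fun u : ℝ => p * u) p s := by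
        simpa using (hasDerivAt_id s).const_mul p
      exact (h2.add ((hasDerivAt_pow 2 s).div_const 8)).congr_deriv (by norm_num)
    have h3 : HasDerivAt (fun s => Real.log (g s)) (p * exp s / g s) s :=
      (hgd s).log (hgpos s).ne'
    have := h1.sub h3
    refine this.congr_deriv ?_
    show p + 2 * s / 8 - p * exp s / g s = p + s / 4 - p * exp s / g s
    ring
  have hf'd : ∀ s, HasDerivAt f' (1 / 4 - (p * exp s * g s - p * exp s * (p * exp s)) / (g s) ^ 2) s := by
    intro s
    have h1 : HasDerivAt (fun s : ℝ => p + s / 4) (1 / 4) s := by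
      simpa using ((hasDerivAt_id s).div_const 4).const_add p
    have h2 : HasDerivAt (fun s => p * exp s) (p * exp s) s := by
      simpa using (Real.hasDerivAt_exp s).const_mul p
    have h3 := h2.div (hgd s) (hgpos s).ne'
    exact h1.sub h3
  have hf''_nonneg : ∀ s, 0 ≤ 1 / 4 - (p * exp s * g s - p * exp s * (p * exp s)) / (g s) ^ 2 := by
    intro s
    have hgs := hgpos s
    rw [sub_nonneg, div_le_iff₀ (by positivity)]
    nlinarith [sq_nonneg (g s / 2 - p * exp s)]
  -- f' is monotone
  have hmono : Monotone f' := by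
    apply monotone_of_deriv_nonneg
    · exact fun s => (hf'd s).differentiableAt
    · intro s
      rw [(hf'd s).deriv]
      exact hf''_nonneg s
  have hf'0 : f' 0 = 0 := by simp [hf', hg]
  have hf0 : f 0 = 0 := by simp [hf, hg]
  have key : 0 ≤ f t := by
    rcases le_total 0 t with ht | ht
    · have hmf : MonotoneOn f (Set.Ici (0:ℝ)) := by
        apply monotoneOn_of_deriv_nonneg (convex_Ici 0)
        · exact Continuous.continuousOn
            (Differentiable.continuous (fun s => (hfd s).differentiableAt))
        · intro s hs
          exact ((hfd s).differentiableAt).differentiableWithinAt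
        · intro s hs
          rw [(hfd s).deriv]
          rw [← hf'0]
          exact hmono (le_of_lt (by simpa using hs))
      have := hmf (Set.self_mem_Ici) (Set.mem_Ici.mpr ht) ht
      linarith [hf0 ▸ this]
    · have hmf : AntitoneOn f (Set.Iic (0:ℝ)) := by
        apply antitoneOn_of_deriv_nonpos (convex_Iic 0)
        · exact Continuous.continuousOn
            (Differentiable.continuous (fun s => (hfd s).differentiableAt))
        · intro s hs
          exact ((hfd s).differentiableAt).differentiableWithinAt
        · intro s hs
          rw [(hfd s).deriv]
          rw [← hf'0]
          exact hmono (le_of_lt (by simpa using hs))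
      have := hmf (Set.mem_Iic.mpr ht) (Set.self_mem_Iic) ht
      linarith [hf0 ▸ this]
  have := key
  simp only [hf] at this
  linarith

lemma bern_mgf_le {p : ℝ} (hp0 : 0 ≤ p) (hp1 : p ≤ 1) (t : ℝ) :
    (1 - p) * exp (t * (0 - p)) + p * exp (t * (1 - p)) ≤ exp (t ^ 2 / 8) := by
  have h1 : (1 - p) + p * exp t ≤ exp (p * t + t ^ 2 / 8) :=
    (Real.log_le_iff_le_exp (bern_g_pos hp0 hp1 t)).mp (bern_log_le hp0 hp1 t)
  have h2 : (1 - p) * exp (t * (0 - p)) + p * exp (t * (1 - p))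
      = exp (-(p * t)) * ((1 - p) + p * exp t) := by
    rw [mul_add, mul_comm (exp (-(p*t))) (1 - p),
      mul_comm (exp (-(p*t))), mul_assoc, ← Real.exp_add]
    have : t * (0 - p) = -(p * t) := by ring
    rw [this]
    have : t + -(p * t) = t * (1 - p) := by ring
    rw [this]
  rw [h2]
  calc exp (-(p * t)) * ((1 - p) + p * exp t)
      ≤ exp (-(p * t)) * exp (p * t + t ^ 2 / 8) := by
        apply mul_le_mul_of_nonneg_left h1 (exp_pos _).le
    _ = exp (t ^ 2 / 8) := by rw [← Real.exp_add]; ring_nf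
open Real MeasureTheory ProbabilityTheory

lemma bern_exp_eq {Ω : Type*} (A : Set Ω) (q t : ℝ) :
    (fun ω => exp (t * (A.indicator (fun _ => (1:ℝ)) ω - q)))
      = fun ω => A.indicator (fun _ => exp (t * (1 - q))) ω
          + Aᶜ.indicator (fun _ => exp (t * (0 - q))) ω := by
  classical
  funext ω
  by_cases h : ω ∈ A <;>
    simp [h, Set.indicator_of_mem, Set.indicator_of_notMem]

lemma bern_int {Ω : Type*} [MeasurableSpace Ω] (μ : Measure Ω) [IsProbabilityMeasure μ]
    {A : Set Ω} (hA : MeasurableSet A) (q t : ℝ) :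
    Integrable (fun ω => exp (t * (A.indicator (fun _ => (1:ℝ)) ω - q))) μ := by
  rw [bern_exp_eq]
  exact ((integrable_const _).indicator hA).add ((integrable_const _).indicator hA.compl)

lemma bern_mgf_eq {Ω : Type*} [MeasurableSpace Ω] (μ : Measure Ω) [IsProbabilityMeasure μ]
    {A : Set Ω} (hA : MeasurableSet A) {q : ℝ} (hq : (μ A).toReal = q) (t : ℝ) :
    mgf (fun ω => A.indicator (fun _ => (1:ℝ)) ω - q) μ t
      = (1 - q) * exp (t * (0 - q)) + q * exp (t * (1 - q)) := by
  have hAc : (μ Aᶜ).toReal = 1 - q := by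
    rw [prob_compl_eq_one_sub hA, ENNReal.toReal_sub_of_le prob_le_one ENNReal.one_ne_top,
      ENNReal.toReal_one, hq]
  rw [mgf, bern_exp_eq]
  rw [integral_add ((integrable_const _).indicator hA) ((integrable_const _).indicator hA.compl),
    integral_indicator_const _ hA, integral_indicator_const _ hA.compl, measureReal_def, measureReal_def, hq, hAc]
  simp [mul_comm]
  ring
open Real MeasureTheory ProbabilityTheory

lemma chernoff_sum {Ω : Type*} [MeasurableSpace Ω] (μ : Measure Ω) [IsProbabilityMeasure μ]
    {N : ℕ} (Z : Fin N → Ω → ℝ)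
    (hZmeas : ∀ j, Measurable (Z j))
    (hZind : iIndepFun Z μ)
    (hint : ∀ j (t : ℝ), Integrable (fun ω => exp (t * Z j ω)) μ)
    (hmgf : ∀ j (t : ℝ), mgf (Z j) μ t ≤ exp (t ^ 2 / 8))
    (δ : ℝ) (hδ : 0 < δ) :
    (μ {ω | (N : ℝ) * δ ≤ (∑ j, Z j) ω}).toReal ≤ exp (-(2 * N * δ ^ 2)) ∧
    (μ {ω | (∑ j, Z j) ω ≤ -((N : ℝ) * δ)}).toReal ≤ exp (-(2 * N * δ ^ 2)) := by
  have hmgfsum : ∀ t : ℝ, mgf (∑ j, Z j) μ t ≤ exp ((N : ℝ) * t ^ 2 / 8) := by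
    intro t
    rw [hZind.mgf_sum hZmeas]
    calc ∏ j : Fin N, mgf (Z j) μ t ≤ ∏ _j : Fin N, exp (t ^ 2 / 8) :=
          Finset.prod_le_prod (fun j _ => mgf_nonneg) (fun j _ => hmgf j t)
      _ = exp (t ^ 2 / 8) ^ N := by simp
      _ = exp ((N : ℝ) * t ^ 2 / 8) := by
          rw [← Real.exp_nat_mul]; ring_nf
  have hintsum : ∀ t : ℝ, Integrable (fun ω => exp (t * (∑ j, Z j) ω)) μ := fun t =>
    hZind.integrable_exp_mul_sum hZmeas (fun j _ => hint j t)
  constructor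
  · have h := measure_ge_le_exp_mul_mgf (X := ∑ j, Z j) (μ := μ) (t := 4 * δ)
      ((N : ℝ) * δ) (by positivity) (hintsum _)
    refine h.trans ?_
    calc exp (-(4 * δ) * ((N : ℝ) * δ)) * mgf (∑ j, Z j) μ (4 * δ)
        ≤ exp (-(4 * δ) * ((N : ℝ) * δ)) * exp ((N : ℝ) * (4 * δ) ^ 2 / 8) := by
          exact mul_le_mul_of_nonneg_left (hmgfsum _) (exp_pos _).le
      _ = exp (-(2 * N * δ ^ 2)) := by rw [← Real.exp_add]; ring_nf
  · have h := measure_le_le_exp_mul_mgf (X := ∑ j, Z j) (μ := μ) (t := -(4 * δ))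
      (-((N : ℝ) * δ)) (by linarith) (hintsum _)
    refine h.trans ?_
    calc exp (-(-(4 * δ)) * (-((N : ℝ) * δ))) * mgf (∑ j, Z j) μ (-(4 * δ))
        ≤ exp (-(-(4 * δ)) * (-((N : ℝ) * δ))) * exp ((N : ℝ) * (-(4 * δ)) ^ 2 / 8) := by
          exact mul_le_mul_of_nonneg_left (hmgfsum _) (exp_pos _).le
      _ = exp (-(2 * N * δ ^ 2)) := by rw [← Real.exp_add]; ring_nf

/-- Let `p` be a probability vector on `{1,…,T}` and `X_1,…,X_N`
i.i.d. samples from `p`, with empirical distribution `p̂`.  If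
`N ≥ (2T²/ε²)·ln(2T/η)` with `ε, η ∈ (0,1)`, then
`P[ ∑_i |p̂_i − p_i| > ε/2 ] ≤ η`. -/
theorem empirical_l1_small_whp
    {Ω : Type*} [MeasurableSpace Ω] (μ : Measure Ω) [IsProbabilityMeasure μ]
    (T N : ℕ) (hT : 0 < T) (hN : 0 < N)
    (ε η : ℝ) (hε : 0 < ε) (hε1 : ε < 1) (hη : 0 < η) (hη1 : η < 1)
    (p : Fin T → ℝ) (hp0 : ∀ i, 0 ≤ p i) (hp1 : ∑ i, p i = 1)
    (X : Fin N → Ω → Fin T)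
    (hmeas : ∀ j, Measurable (X j))
    (hind : iIndepFun X μ)
    (hdist : ∀ j i, (μ {ω | X j ω = i}).toReal = p i)
    (hbig : (2 * (T : ℝ) ^ 2 / ε ^ 2) * Real.log (2 * (T : ℝ) / η) ≤ (N : ℝ)) :
    (μ {ω | ε / 2 <
        ∑ i : Fin T,
          |((Finset.univ.filter fun j : Fin N => X j ω = i).card : ℝ) / (N : ℝ)
            - p i|}).toReal ≤ η := by
  classical
  have hT' : (0:ℝ) < T := by exact_mod_cast hT
  have hN' : (0:ℝ) < N := by exact_mod_cast hN
  set δ : ℝ := ε / (2 * T) with hδdef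
  have hδ : 0 < δ := by positivity
  set A : Fin T → Fin N → Set Ω := fun i j => {ω | X j ω = i} with hA
  have hAmeas : ∀ i j, MeasurableSet (A i j) := fun i j =>
    (hmeas j) (MeasurableSet.singleton i)
  set Z : Fin T → Fin N → Ω → ℝ :=
    fun i j ω => (A i j).indicator (fun _ => (1:ℝ)) ω - p i with hZ
  have hZmeas : ∀ i j, Measurable (Z i j) := fun i j =>
    (measurable_const.indicator (hAmeas i j)).sub measurable_const
  have hZind : ∀ i, iIndepFun (Z i) μ := by
    intro i
    have : Z i = fun j =>
        (fun x : Fin T => ({i} : Set (Fin T)).indicator (fun _ => (1:ℝ)) x - p i) ∘ X j := by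
      funext j ω; rfl
    rw [this]
    exact hind.comp _ (fun j => measurable_of_countable _)
  have hq1 : ∀ i, p i ≤ 1 := fun i =>
    hp1 ▸ Finset.single_le_sum (fun j _ => hp0 j) (Finset.mem_univ i)
  have hint : ∀ i j (t : ℝ), Integrable (fun ω => exp (t * Z i j ω)) μ := fun i j t =>
    bern_int μ (hAmeas i j) (p i) t
  have hmgfB : ∀ i j (t : ℝ), mgf (Z i j) μ t ≤ exp (t ^ 2 / 8) := by
    intro i j t
    rw [hZ]
    rw [bern_mgf_eq μ (hAmeas i j) (hdist j i) t]
    exact bern_mgf_le (hp0 i) (hq1 i) t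
  set W : Fin T → Ω → ℝ := fun i => ∑ j, Z i j with hW
  set r : ℝ := exp (-(2 * N * δ ^ 2)) with hr
  have hr0 : (0:ℝ) ≤ r := (exp_pos _).le
  have hchern : ∀ i,
      (μ {ω | (N : ℝ) * δ ≤ W i ω}).toReal ≤ r ∧
      (μ {ω | W i ω ≤ -((N : ℝ) * δ)}).toReal ≤ r := fun i =>
    chernoff_sum μ (Z i) (hZmeas i) (hZind i) (fun j t => hint i j t)
      (fun j t => hmgfB i j t) δ hδ
  -- identity for W
  have hWeq : ∀ i ω, W i ω
      = ((Finset.univ.filter fun j : Fin N => X j ω = i).card : ℝ) - N * p i := by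
    intro i ω
    rw [hW]
    simp only [Finset.sum_apply, hZ]
    rw [Finset.sum_sub_distrib, Finset.sum_const, Finset.card_univ, Fintype.card_fin,
      nsmul_eq_mul]
    congr 1
    have : ∀ j : Fin N, (A i j).indicator (fun _ => (1:ℝ)) ω
        = if X j ω = i then (1:ℝ) else 0 := by
      intro j
      rw [Set.indicator_apply]
      congr 1
    rw [Finset.sum_congr rfl (fun j _ => this j)]
    rw [Finset.sum_boole]
  -- event inclusion
  have hsub : {ω | ε / 2 <
        ∑ i : Fin T,
          |((Finset.univ.filter fun j : Fin N => X j ω = i).card : ℝ) / (N : ℝ)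
            - p i|} ⊆
      ⋃ i : Fin T, ({ω | (N : ℝ) * δ ≤ W i ω} ∪ {ω | W i ω ≤ -((N : ℝ) * δ)}) := by
    intro ω hω
    simp only [Set.mem_setOf_eq] at hω
    by_contra hc
    simp only [Set.mem_iUnion, Set.mem_union, Set.mem_setOf_eq, not_exists, not_or,
      not_le] at hc
    have hbound : ∀ i : Fin T,
        |((Finset.univ.filter fun j : Fin N => X j ω = i).card : ℝ) / (N : ℝ) - p i| ≤ δ := by
      intro i
      obtain ⟨h1, h2⟩ := hc i
      rw [hWeq i ω] at h1 h2
      set c : ℝ := ((Finset.univ.filter fun j : Fin N => X j ω = i).card : ℝ) with hc'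
      have hkey : c - N * p i = N * (c / N - p i) := by field_simp
      rw [hkey] at h1 h2
      rw [abs_le]
      constructor
      · nlinarith
      · nlinarith
    have hsum : ∑ i : Fin T,
        |((Finset.univ.filter fun j : Fin N => X j ω = i).card : ℝ) / (N : ℝ) - p i|
        ≤ T * δ := by
      calc _ ≤ ∑ _i : Fin T, δ := Finset.sum_le_sum (fun i _ => hbound i)
        _ = T * δ := by rw [Finset.sum_const, Finset.card_univ, Fintype.card_fin,
              nsmul_eq_mul]
    have hTδ : (T:ℝ) * δ = ε / 2 := by rw [hδdef]; field_simp
    linarith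
  -- measure bound in ℝ≥0∞
  have hle1 : ∀ i, μ {ω | (N : ℝ) * δ ≤ W i ω} ≤ ENNReal.ofReal r := fun i =>
    (ENNReal.le_ofReal_iff_toReal_le (measure_ne_top μ _) hr0).mpr (hchern i).1
  have hle2 : ∀ i, μ {ω | W i ω ≤ -((N : ℝ) * δ)} ≤ ENNReal.ofReal r := fun i =>
    (ENNReal.le_ofReal_iff_toReal_le (measure_ne_top μ _) hr0).mpr (hchern i).2
  have hEle : μ {ω | ε / 2 <
        ∑ i : Fin T,
          |((Finset.univ.filter fun j : Fin N => X j ω = i).card : ℝ) / (N : ℝ)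
            - p i|} ≤ ENNReal.ofReal ((T:ℝ) * (2 * r)) := by
    calc μ _ ≤ μ (⋃ i : Fin T,
          ({ω | (N : ℝ) * δ ≤ W i ω} ∪ {ω | W i ω ≤ -((N : ℝ) * δ)})) := measure_mono hsub
      _ ≤ ∑' i : Fin T, μ ({ω | (N : ℝ) * δ ≤ W i ω} ∪ {ω | W i ω ≤ -((N : ℝ) * δ)}) :=
          measure_iUnion_le _
      _ = ∑ i : Fin T, μ ({ω | (N : ℝ) * δ ≤ W i ω} ∪ {ω | W i ω ≤ -((N : ℝ) * δ)}) :=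
          tsum_fintype _
      _ ≤ ∑ _i : Fin T, (ENNReal.ofReal r + ENNReal.ofReal r) :=
          Finset.sum_le_sum (fun i _ =>
            (measure_union_le _ _).trans (add_le_add (hle1 i) (hle2 i)))
      _ = ENNReal.ofReal ((T:ℝ) * (2 * r)) := by
          rw [Finset.sum_const, Finset.card_univ, Fintype.card_fin, nsmul_eq_mul,
            ← ENNReal.ofReal_add hr0 hr0, ← ENNReal.ofReal_natCast,
            ← ENNReal.ofReal_mul (by positivity)]
          congr 1
          ring
  have hreal : (μ {ω | ε / 2 <
        ∑ i : Fin T,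
          |((Finset.univ.filter fun j : Fin N => X j ω = i).card : ℝ) / (N : ℝ)
            - p i|}).toReal ≤ (T:ℝ) * (2 * r) := by
    have := ENNReal.toReal_mono ENNReal.ofReal_ne_top hEle
    rwa [ENNReal.toReal_ofReal (by positivity)] at this
  refine hreal.trans ?_
  -- final arithmetic
  have hlog : Real.log (2 * (T:ℝ) / η) ≤ 2 * N * δ ^ 2 := by
    have h2 : (0:ℝ) < ε ^ 2 / (2 * (T:ℝ) ^ 2) := by positivity
    have h3 := mul_le_mul_of_nonneg_right hbig h2.le
    have h4 : 2 * (T:ℝ) ^ 2 / ε ^ 2 * Real.log (2 * (T:ℝ) / η) * (ε ^ 2 / (2 * (T:ℝ) ^ 2))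
        = Real.log (2 * (T:ℝ) / η) := by field_simp
    have h5 : 2 * (N:ℝ) * δ ^ 2 = (N:ℝ) * (ε ^ 2 / (2 * (T:ℝ) ^ 2)) := by
      rw [hδdef]; field_simp
    rw [h5]
    rw [h4] at h3
    exact h3
  have hrle : r ≤ η / (2 * (T:ℝ)) := by
    rw [hr]
    have h1 : exp (-(2 * (N:ℝ) * δ ^ 2)) ≤ exp (-(Real.log (2 * (T:ℝ) / η))) :=
      exp_le_exp.mpr (by linarith)
    refine h1.trans_eq ?_
    rw [Real.exp_neg, Real.exp_log (by positivity), inv_div]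
  have h6 := mul_le_mul_of_nonneg_left hrle (by positivity : (0:ℝ) ≤ 2 * (T:ℝ))
  have h7 : 2 * (T:ℝ) * (η / (2 * (T:ℝ))) = η := by field_simp
  rw [h7] at h6
  linarith
end
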